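/- Let f: R^d → R be self-concordant with minimizer x_* and Hessian H_* = ∇²f(x_*). If ‖x − x_*‖_* < 1, then ‖H_*⁻¹∇f(x)‖_* ≤ ‖x − x_*‖_* / (1 − ‖x − x_*‖_*). -/

import Mathlib

open Matrix MeasureTheory Filter
open scoped Classical

noncomputable section

/-- Vectors in `ℝ^d` with the Euclidean (2-)norm. -/
abbrev Vec (d : ℕ) := EuclideanSpace ℝ (Fin d)

/-- Matrix square root of a positive semidefinite matrix (junk value `0` otherwise). -/
noncomputable def msqrt {d : ℕ} (M : Matrix (Fin d) (Fin d) ℝ) : Matrix (Fin d) (Fin d) ℝ :=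
  if h : M.PosSemidef then
    (h.1.eigenvectorUnitary : Matrix (Fin d) (Fin d) ℝ) *
      diagonal (fun i => Real.sqrt (h.1.eigenvalues i)) *
      (star h.1.eigenvectorUnitary : Matrix (Fin d) (Fin d) ℝ)
  else 0

/-- Frobenius norm of a square matrix. -/
noncomputable def frobNorm {d : ℕ} (M : Matrix (Fin d) (Fin d) ℝ) : ℝ :=
  Real.sqrt (Matrix.trace (Mᵀ * M))

/-- Weighted Frobenius norm `‖W‖_{F(H)} = ‖H^{1/2} W H^{1/2}‖_F`. -/
noncomputable def wFrob {d : ℕ} (H W : Matrix (Fin d) (Fin d) ℝ) : ℝ :=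
  frobNorm (msqrt H * W * msqrt H)

/-- Local norm `‖v‖_H = √⟨H v, v⟩`. -/
noncomputable def localNorm {d : ℕ} (H : Matrix (Fin d) (Fin d) ℝ) (v : Vec d) : ℝ :=
  Real.sqrt (inner ℝ (Matrix.toEuclideanLin H v) v : ℝ)

/-- `f` is self-concordant, expressed through its Hessian map `Hf`:
the Hessian is everywhere positive definite and the local norms at nearby points are
comparable. -/
def SelfConcordant {d : ℕ} (Hf : Vec d → Matrix (Fin d) (Fin d) ℝ) : Prop :=
  (∀ x, (Hf x).PosDef) ∧
  ∀ x y v : Vec d, localNorm (Hf x) (y - x) < 1 → v ≠ 0 →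
    1 - localNorm (Hf x) (y - x) ≤ localNorm (Hf y) v / localNorm (Hf x) v ∧
      localNorm (Hf y) v / localNorm (Hf x) v ≤ 1 / (1 - localNorm (Hf x) (y - x))

/-- `g` is the gradient of `f` and `Hf` is its Hessian (the derivative of the gradient). -/
def IsGradHess {d : ℕ} (f : Vec d → ℝ) (g : Vec d → Vec d)
    (Hf : Vec d → Matrix (Fin d) (Fin d) ℝ) : Prop :=
  (∀ x, HasGradientAt f (g x) x) ∧
  ∀ x, HasFDerivAt g (Matrix.toEuclideanCLM (𝕜 := ℝ) (Hf x) : Vec d →L[ℝ] Vec d) x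

/-- Smallest eigenvalue of a symmetric matrix, via the Rayleigh quotient. -/
noncomputable def lambdaMin {d : ℕ} (M : Matrix (Fin d) (Fin d) ℝ) : ℝ :=
  ⨅ v : {v : Vec d // ‖v‖ = 1}, (inner ℝ (Matrix.toEuclideanLin M v.1) v.1 : ℝ)

/-- Entrywise expectation of a random matrix. -/
noncomputable def expMat {Ω : Type*} [MeasurableSpace Ω] (μ : Measure Ω)
    {m n : ℕ} (M : Ω → Matrix (Fin m) (Fin n) ℝ) : Matrix (Fin m) (Fin n) ℝ :=
  Matrix.of fun i j => ∫ ω, M ω i j ∂μ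

/-- The projection matrix `Z = H^{1/2} S (Sᵀ H S)⁻¹ Sᵀ H^{1/2}`. -/
noncomputable def sketchProj {d τ : ℕ} (H : Matrix (Fin d) (Fin d) ℝ)
    (S : Matrix (Fin d) (Fin τ) ℝ) : Matrix (Fin d) (Fin d) ℝ :=
  msqrt H * S * (Sᵀ * H * S)⁻¹ * Sᵀ * msqrt H

/-- The (randomized) BFGS update
`BFGS(B, H, S) = G + (I - G H) B (I - H G)` with `G = S (Sᵀ H S)⁻¹ Sᵀ`. -/
noncomputable def bfgsUpdate {d τ : ℕ} (B H : Matrix (Fin d) (Fin d) ℝ)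
    (S : Matrix (Fin d) (Fin τ) ℝ) : Matrix (Fin d) (Fin d) ℝ :=
  S * (Sᵀ * H * S)⁻¹ * Sᵀ +
    (1 - S * (Sᵀ * H * S)⁻¹ * Sᵀ * H) * B * (1 - H * (S * (Sᵀ * H * S)⁻¹ * Sᵀ))

/-- Spectral (operator 2-)norm of a matrix. -/
noncomputable def opNorm2 {d : ℕ} (M : Matrix (Fin d) (Fin d) ℝ) : ℝ :=
  ‖(Matrix.toEuclideanCLM (𝕜 := ℝ) M : Vec d →L[ℝ] Vec d)‖

instance matrixMeasurableSpace {m n : Type*} : MeasurableSpace (Matrix m n ℝ) :=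
  MeasurableSpace.pi

/-- The sketching matrices `S k` are i.i.d. samples from a common distribution `D`. -/
def IIDSketch {d τ : ℕ} {Ω : Type*} [MeasurableSpace Ω] (μ : Measure Ω)
    (S : ℕ → Ω → Matrix (Fin d) (Fin τ) ℝ) : Prop :=
  (∀ k, Measurable (S k)) ∧
  ProbabilityTheory.iIndepFun (m := fun _ => matrixMeasurableSpace) S μ ∧
  ∀ k, Measure.map (S k) μ = Measure.map (S 0) μ

end

section Helpers

open Matrix

open scoped MatrixOrder

variable {d : ℕ}

lemma inner_teLin (M : Matrix (Fin d) (Fin d) ℝ) (u w : Vec d) :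
    (inner ℝ (Matrix.toEuclideanLin M u) w : ℝ)
      = (M *ᵥ (WithLp.equiv 2 _ u)) ⬝ᵥ (WithLp.equiv 2 _ w) := by
  rw [EuclideanSpace.inner_eq_star_dotProduct, star_trivial, dotProduct_comm]
  rfl

lemma transpose_of_herm {M : Matrix (Fin d) (Fin d) ℝ} (hM : M.IsHermitian) : Mᵀ = M := by
  simpa using hM.eq

lemma inner_teLin_symm (M : Matrix (Fin d) (Fin d) ℝ) (hM : M.IsHermitian) (u w : Vec d) :
    (inner ℝ (Matrix.toEuclideanLin M u) w : ℝ) = (inner ℝ (Matrix.toEuclideanLin M w) u : ℝ) := by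
  rw [inner_teLin, inner_teLin, dotProduct_comm, dotProduct_mulVec, ← mulVec_transpose,
    transpose_of_herm hM]

lemma inner_teLin_sqrt {M : Matrix (Fin d) (Fin d) ℝ} (hM : M.PosSemidef) (u w : Vec d) :
    (inner ℝ (Matrix.toEuclideanLin M u) w : ℝ)
      = (inner ℝ (Matrix.toEuclideanLin (CFC.sqrt M) u) (Matrix.toEuclideanLin (CFC.sqrt M) w) : ℝ) := by
  rw [inner_teLin, EuclideanSpace.inner_eq_star_dotProduct, dotProduct_comm _ (star _)]
  have h1 : (Matrix.toEuclideanLin (CFC.sqrt M) u).ofLp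
      = CFC.sqrt M *ᵥ (WithLp.equiv 2 _ u) := rfl
  have h2 : (Matrix.toEuclideanLin (CFC.sqrt M) w).ofLp
      = CFC.sqrt M *ᵥ (WithLp.equiv 2 _ w) := rfl
  rw [h1, h2, star_trivial, dotProduct_mulVec, ← mulVec_transpose, mulVec_mulVec,
    transpose_of_herm (CFC.sqrt_nonneg M).posSemidef.1, CFC.sqrt_mul_sqrt_self M hM.nonneg]

lemma localNorm_eq_norm {M : Matrix (Fin d) (Fin d) ℝ} (hM : M.PosSemidef) (v : Vec d) :
    localNorm M v = ‖Matrix.toEuclideanLin (CFC.sqrt M) v‖ := by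
  rw [localNorm, inner_teLin_sqrt hM, real_inner_self_eq_norm_sq, Real.sqrt_sq (norm_nonneg _)]

lemma abs_inner_le_localNorm {M : Matrix (Fin d) (Fin d) ℝ} (hM : M.PosSemidef) (u w : Vec d) :
    |(inner ℝ (Matrix.toEuclideanLin M u) w : ℝ)| ≤ localNorm M u * localNorm M w := by
  rw [inner_teLin_sqrt hM, localNorm_eq_norm hM, localNorm_eq_norm hM]
  exact abs_real_inner_le_norm _ _

lemma localNorm_smul {M : Matrix (Fin d) (Fin d) ℝ} (hM : M.PosSemidef) (t : ℝ) (v : Vec d) :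
    localNorm M (t • v) = |t| * localNorm M v := by
  rw [localNorm_eq_norm hM, localNorm_eq_norm hM, _root_.map_smul, norm_smul, Real.norm_eq_abs]

lemma localNorm_nonneg (M : Matrix (Fin d) (Fin d) ℝ) (v : Vec d) : 0 ≤ localNorm M v :=
  Real.sqrt_nonneg _

lemma localNorm_zero (M : Matrix (Fin d) (Fin d) ℝ) : localNorm M (0 : Vec d) = 0 := by
  simp [localNorm]

lemma localNorm_pos {M : Matrix (Fin d) (Fin d) ℝ} (hM : M.PosDef) {v : Vec d} (hv : v ≠ 0) :
    0 < localNorm M v := by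
  rw [localNorm]
  apply Real.sqrt_pos.2
  rw [inner_teLin, dotProduct_comm]
  have := hM.dotProduct_mulVec_pos (x := WithLp.equiv 2 _ v) (fun h => hv (by ext i; exact congrFun h i))
  simpa using this

lemma localNorm_sq {M : Matrix (Fin d) (Fin d) ℝ} (hM : M.PosSemidef) (v : Vec d) :
    localNorm M v ^ 2 = (inner ℝ (Matrix.toEuclideanLin M v) v : ℝ) := by
  rw [localNorm_eq_norm hM, ← real_inner_self_eq_norm_sq, ← inner_teLin_sqrt hM]

end Helpers

set_option maxHeartbeats 1000000 in
private theorem aux_inv_hessian_grad_bound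
    {d : ℕ} (f : Vec d → ℝ) (g : Vec d → Vec d) (Hf : Vec d → Matrix (Fin d) (Fin d) ℝ)
    (hfgH : IsGradHess f g Hf) (hsc : SelfConcordant Hf)
    (xstar : Vec d) (hmin : ∀ y, f xstar ≤ f y)
    (x : Vec d) (hx : localNorm (Hf xstar) (x - xstar) < 1) :
    localNorm (Hf xstar) (Matrix.toEuclideanLin (Hf xstar)⁻¹ (g x)) ≤
      localNorm (Hf xstar) (x - xstar) / (1 - localNorm (Hf xstar) (x - xstar)) := by
  obtain ⟨hgrad, hhess⟩ := hfgH
  obtain ⟨hpos, hsc2⟩ := hsc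
  have hH : (Hf xstar).PosDef := hpos xstar
  have hHsd := hH.posSemidef
  set H := Hf xstar with hHdef
  set r : Vec d := x - xstar with hrdef
  set a : ℝ := localNorm H r with hadef
  have ha0 : 0 ≤ a := localNorm_nonneg _ _
  have ha1 : a < 1 := hx
  have h1a : (0:ℝ) < 1 - a := by linarith
  -- gradient vanishes at the minimizer
  have hg0 : g xstar = 0 := by
    have hloc : IsLocalMin f xstar := Filter.Eventually.of_forall hmin
    have h0 := hloc.hasFDerivAt_eq_zero (hgrad xstar).hasFDerivAt
    exact (LinearIsometryEquiv.map_eq_zero_iff _).mp h0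
  set v : Vec d := Matrix.toEuclideanLin H⁻¹ (g x) with hvdef
  set L : ℝ := localNorm H v with hLdef
  have hL0 : 0 ≤ L := localNorm_nonneg _ _
  -- self-concordance comparison along the segment
  have hta : ∀ t ∈ Set.Icc (0:ℝ) 1, (0:ℝ) < 1 - t * a ∧ 1 - a ≤ 1 - t * a := by
    intro t ht
    constructor
    · nlinarith [ht.1, ht.2]
    · nlinarith [ht.1, ht.2]
  have hscb : ∀ t ∈ Set.Icc (0:ℝ) 1, ∀ w : Vec d,
      localNorm (Hf (xstar + t • r)) w ≤ localNorm H w / (1 - t * a) := by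
    intro t ht w
    have h1ta := (hta t ht).1
    by_cases hw : w = 0
    · simp [hw, localNorm_zero]
    · have hdist : localNorm H ((xstar + t • r) - xstar) = t * a := by
        have : (xstar + t • r) - xstar = t • r := by abel
        rw [this, localNorm_smul hHsd, abs_of_nonneg ht.1]
      have hlt : localNorm H ((xstar + t • r) - xstar) < 1 := by rw [hdist]; linarith
      have h2 := (hsc2 xstar (xstar + t • r) w hlt hw).2
      rw [hdist] at h2
      have hLw : 0 < localNorm H w := localNorm_pos hH hw
      rw [div_le_div_iff₀ hLw h1ta] at h2
      rw [le_div_iff₀ h1ta]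
      linarith
  -- derivative of t ↦ ⟪v, g (xstar + t • r)⟫
  set D : ℝ → ℝ := fun t => (inner ℝ v (Matrix.toEuclideanLin (Hf (xstar + t • r)) r) : ℝ)
    with hDdef
  set ψ : ℝ → ℝ := fun t => (inner ℝ v (g (xstar + t • r)) : ℝ) with hψdef
  have hderiv : ∀ t : ℝ, HasDerivAt ψ (D t) t := by
    intro t
    have hp : HasDerivAt (fun s : ℝ => xstar + s • r) r t := by
      simpa using ((hasDerivAt_id t).smul_const r).const_add xstar
    have hgp : HasDerivAt (fun s : ℝ => g (xstar + s • r))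
        ((Matrix.toEuclideanCLM (𝕜 := ℝ) (Hf (xstar + t • r)) : Vec d →L[ℝ] Vec d) r) t :=
      (hhess (xstar + t • r)).comp_hasDerivAt t hp
    have hcomp := ((innerSL ℝ v).hasFDerivAt.comp_hasDerivAt t hgp)
    have heq : (Matrix.toEuclideanCLM (𝕜 := ℝ) (Hf (xstar + t • r)) : Vec d →L[ℝ] Vec d) r
        = Matrix.toEuclideanLin (Hf (xstar + t • r)) r := by
      have := Matrix.coe_toEuclideanCLM_eq_toEuclideanLin (𝕜 := ℝ) (Hf (xstar + t • r))
      exact DFunLike.congr_fun this r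
    simp [heq] at hcomp
    exact hcomp
  -- bound on D
  have hDb : ∀ t ∈ Set.Icc (0:ℝ) 1, |D t| ≤ a * L / (1 - t * a) ^ 2 := by
    intro t ht
    obtain ⟨h1ta, hmono⟩ := hta t ht
    have hsym : D t = (inner ℝ (Matrix.toEuclideanLin (Hf (xstar + t • r)) r) v : ℝ) :=
      real_inner_comm _ _
    have hcs := abs_inner_le_localNorm (hpos (xstar + t • r)).posSemidef r v
    have hb1 := hscb t ht r
    have hb2 := hscb t ht v
    have hn1 : 0 ≤ localNorm (Hf (xstar + t • r)) r := localNorm_nonneg _ _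
    have hn2 : 0 ≤ localNorm (Hf (xstar + t • r)) v := localNorm_nonneg _ _
    calc |D t| ≤ localNorm (Hf (xstar + t • r)) r * localNorm (Hf (xstar + t • r)) v := by
            rw [hsym]; exact hcs
      _ ≤ (a / (1 - t * a)) * (L / (1 - t * a)) := by
            exact mul_le_mul hb1 hb2 hn2 (div_nonneg ha0 h1ta.le)
      _ = a * L / (1 - t * a) ^ 2 := by field_simp [h1ta.ne']
  -- integrability of D on [0,1]
  have hDmeas : IntervalIntegrable D MeasureTheory.volume 0 1 := by
    have hDeq : D = deriv ψ := by
      funext t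
      exact ((hderiv t).deriv).symm
    rw [intervalIntegrable_iff_integrableOn_Ioc_of_le zero_le_one]
    apply MeasureTheory.Integrable.mono' (MeasureTheory.integrable_const (a * L / (1 - a) ^ 2))
    · rw [hDeq]
      exact (measurable_deriv ψ).aestronglyMeasurable.restrict
    · rw [MeasureTheory.ae_restrict_iff' measurableSet_Ioc]
      filter_upwards with t ht
      have ht' : t ∈ Set.Icc (0:ℝ) 1 := ⟨ht.1.le, ht.2⟩
      obtain ⟨h1ta, hmono⟩ := hta t ht'
      refine (hDb t ht').trans ?_
      apply div_le_div_of_nonneg_left (mul_nonneg ha0 hL0) (by positivity)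
      nlinarith
  -- the majorant and its antiderivative
  set F : ℝ → ℝ := fun t => L * (1 - t * a)⁻¹ with hFdef
  have hFderiv : ∀ t ∈ Set.Icc (0:ℝ) 1, HasDerivAt F (a * L / (1 - t * a) ^ 2) t := by
    intro t ht
    have h1ta := (hta t ht).1
    have h1 : HasDerivAt (fun s : ℝ => 1 - s * a) (-a) t := by
      simpa using ((hasDerivAt_id t).mul_const a).const_sub 1
    have h2 := h1.inv h1ta.ne'
    have h3 := h2.const_mul L
    refine h3.congr_deriv ?_
    ring
  have hFcont : IntervalIntegrable (fun t => a * L / (1 - t * a) ^ 2)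
      MeasureTheory.volume 0 1 := by
    apply ContinuousOn.intervalIntegrable
    rw [Set.uIcc_of_le zero_le_one]
    apply ContinuousOn.div continuousOn_const
    · fun_prop
    · intro t ht
      have := (hta t ht).1
      positivity
  -- fundamental theorem of calculus
  have hftc : (inner ℝ v (g x) : ℝ) = ∫ t in (0:ℝ)..1, D t := by
    have := intervalIntegral.integral_eq_sub_of_hasDerivAt
      (f := ψ) (f' := D) (a := 0) (b := 1)
      (fun t _ => hderiv t) hDmeas
    rw [this]
    have hψ0 : ψ 0 = 0 := by simp [hψdef, hg0]
    have hψ1 : ψ 1 = (inner ℝ v (g x) : ℝ) := by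
      have hxx : xstar + r = x := by rw [hrdef]; abel
      show (inner ℝ v (g (xstar + (1:ℝ) • r)) : ℝ) = _
      rw [one_smul, hxx]
    rw [hψ0, hψ1]; ring
  -- integral bound
  have hIb : (∫ t in (0:ℝ)..1, D t) ≤ L * (a / (1 - a)) := by
    have hmono := intervalIntegral.integral_mono_on zero_le_one hDmeas hFcont
      (fun t ht => (le_abs_self _).trans (hDb t ht))
    refine hmono.trans ?_
    have hcalc := intervalIntegral.integral_eq_sub_of_hasDerivAt
      (f := F) (f' := fun t => a * L / (1 - t * a) ^ 2) (a := 0) (b := 1)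
      (fun t ht => hFderiv t (by rwa [Set.uIcc_of_le zero_le_one] at ht)) hFcont
    rw [hcalc, hFdef]
    simp only
    have heq : L * (1 - 1 * a)⁻¹ - L * (1 - 0 * a)⁻¹ = L * (a / (1 - a)) := by
      rw [one_mul, zero_mul, sub_zero]
      field_simp
      ring
    exact le_of_eq heq
  -- conclude
  have hkey : (inner ℝ v (g x) : ℝ) = L ^ 2 := by
    have hHv : Matrix.toEuclideanLin H v = g x := by
      apply (WithLp.equiv 2 (Fin d → ℝ)).injective
      have hdet : IsUnit H.det := isUnit_iff_ne_zero.mpr hH.det_pos.ne'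
      simp only [WithLp.equiv_apply, Matrix.ofLp_toEuclideanLin_apply, hvdef, Matrix.mulVec_mulVec]
      rw [Matrix.mul_nonsing_inv H hdet, Matrix.one_mulVec]
    rw [localNorm_sq hHsd v, hHv, real_inner_comm]
  rw [hftc] at hkey
  have hfinal : L ^ 2 ≤ L * (a / (1 - a)) := hkey ▸ hIb
  have hc0 : 0 ≤ a / (1 - a) := div_nonneg ha0 h1a.le
  nlinarith [hfinal, hL0, hc0]


/-- **Bound on `‖H_*⁻¹ ∇f(x)‖_*` for self-concordant `f`.** -/
theorem inv_hessian_grad_bound_self_concordant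
    {d : ℕ} (f : Vec d → ℝ) (g : Vec d → Vec d) (Hf : Vec d → Matrix (Fin d) (Fin d) ℝ)
    (hfgH : IsGradHess f g Hf) (hsc : SelfConcordant Hf)
    (xstar : Vec d) (hmin : ∀ y, f xstar ≤ f y)
    (x : Vec d) (hx : localNorm (Hf xstar) (x - xstar) < 1) :
    localNorm (Hf xstar) (Matrix.toEuclideanLin (Hf xstar)⁻¹ (g x)) ≤
      localNorm (Hf xstar) (x - xstar) / (1 - localNorm (Hf xstar) (x - xstar)) :=
  aux_inv_hessian_grad_bound f g Hf hfgH hsc xstar hmin x hx
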